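/- The coefficient sequence of the Boros–Moll polynomial P_m(x) = ∑_{k=0}^m c_k(m)(x+1)^k, with c_k(m) = 2^{-2m+k}·C(2m-2k,m-k)·C(m+k,k), is log-concave: its coefficients d_k satisfy d_k² ≥ d_{k-1}d_{k+1} for 1 ≤ k ≤ m-1. -/

import Mathlib

noncomputable def bmCoeff (m k : ℕ) : ℝ :=
  (2 : ℝ) ^ k / (2 : ℝ) ^ (2 * m) * ((2 * m - 2 * k).choose (m - k) : ℝ) *
    ((m + k).choose k : ℝ)

open Finset

/-- truncated coefficient -/
noncomputable def bmC (m j : ℕ) : ℝ := if j ≤ m then bmCoeff m j else 0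

noncomputable def bmD (m k : ℕ) : ℝ := ∑ j ∈ Ico k (m+1), (j.choose k : ℝ) * bmC m j

lemma bmCoeff_pos (m k : ℕ) : 0 < bmCoeff m k := by
  unfold bmCoeff
  have h1 : 0 < ((2*m - 2*k).choose (m - k) : ℝ) := by
    exact_mod_cast Nat.choose_pos (by omega)
  have h2 : 0 < ((m + k).choose k : ℝ) := by
    exact_mod_cast Nat.choose_pos (by omega)
  positivity

lemma bmC_nonneg (m j : ℕ) : 0 ≤ bmC m j := by
  unfold bmC; split
  · exact (bmCoeff_pos m j).le
  · exact le_refl 0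

lemma bmD_nonneg (m k : ℕ) : 0 ≤ bmD m k := by
  apply Finset.sum_nonneg
  intro j _
  exact mul_nonneg (by positivity) (bmC_nonneg m j)

lemma bmD_pos (m k : ℕ) (h : k ≤ m) : 0 < bmD m k := by
  apply Finset.sum_pos
  · intro j hj
    rw [Finset.mem_Ico] at hj
    have h1 : 0 < (j.choose k : ℝ) := by exact_mod_cast Nat.choose_pos hj.1
    have h2 : bmC m j = bmCoeff m j := if_pos (by omega)
    rw [h2]
    exact mul_pos h1 (bmCoeff_pos m j)
  · exact ⟨k, Finset.mem_Ico.mpr ⟨le_refl k, by omega⟩⟩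

lemma bmD_zero (m k : ℕ) (h : m < k) : bmD m k = 0 := by
  unfold bmD
  rw [Finset.Ico_eq_empty (by omega), Finset.sum_empty]

lemma sum_shift (f : ℕ → ℝ) (a b : ℕ) :
    ∑ j ∈ Ico (a+1) (b+1), f j = ∑ i ∈ Ico a b, f (i+1) := by
  rw [← Finset.map_add_right_Ico a b 1, Finset.sum_map]
  rfl

-- central binomial step, real form
lemma centralStep (m : ℕ) :
    ((m:ℝ)+1) * ((2*(m+1)).choose (m+1) : ℝ) = 2*(2*(m:ℝ)+1) * ((2*m).choose m : ℝ) := by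
  have h := Nat.succ_mul_centralBinom_succ m
  unfold Nat.centralBinom at h
  have h2 : ((m+1) * ((2*(m+1)).choose (m+1)) : ℕ) = (2*(2*m+1) * ((2*m).choose m) : ℕ) := h
  exact_mod_cast h2

-- Lemma A top case
lemma lemmaAtop (m : ℕ) :
    2*((m:ℝ)+1) * bmCoeff (m+1) (m+1) = 2*(2*(m:ℝ)+1) * bmCoeff m m := by
  unfold bmCoeff
  rw [show 2*(m+1) - 2*(m+1) = 0 from by omega, show (m+1) - (m+1) = 0 from by omega,
      show 2*m - 2*m = 0 from by omega, show m - m = 0 from by omega,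
      show (m+1) + (m+1) = 2*(m+1) from by omega, show m + m = 2*m from by omega]
  have hc := centralStep m
  have hp : ((2:ℝ))^(2*(m+1)) = 2^m * 2^m * 4 := by
    rw [show 2*(m+1) = (m+m) + 2 from by omega, pow_add, pow_add]; norm_num
  have hq : ((2:ℝ))^(m+1) = 2^m * 2 := by rw [pow_add]; norm_num
  have hr : ((2:ℝ))^(2*m) = 2^m * 2^m := by rw [two_mul, pow_add]
  rw [hp, hq, hr]
  have h1m : ((2:ℝ))^m ≠ 0 := by positivity
  field_simp
  linear_combination 2 * hc

-- Lemma A, k = 0 case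
lemma lemmaA0 (m : ℕ) :
    2*((m:ℝ)+1) * bmCoeff (m+1) 0 = (2*(m:ℝ)+1) * bmCoeff m 0 := by
  unfold bmCoeff
  rw [show 2*(m+1) - 2*0 = 2*(m+1) from by omega, show (m+1) - 0 = m+1 from by omega,
      show 2*m - 2*0 = 2*m from by omega, show m - 0 = m from by omega]
  have hc := centralStep m
  have hp : ((2:ℝ))^(2*(m+1)) = 2^m * 2^m * 4 := by
    rw [show 2*(m+1) = (m+m) + 2 from by omega, pow_add, pow_add]; norm_num
  have hr : ((2:ℝ))^(2*m) = 2^m * 2^m := by rw [two_mul, pow_add]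
  rw [hp, hr]
  have h1m : ((2:ℝ))^m ≠ 0 := by positivity
  simp only [pow_zero, Nat.choose_zero_right, Nat.add_zero, Nat.cast_one]
  field_simp
  linear_combination 2 * hc

-- main case of lemma A: m = i + n + 1 (so i < m)
lemma helperA (i n : ℕ) :
    2*(((i:ℝ)+n+1)+1) * bmCoeff (i+n+2) (i+1)
      = (2*((i:ℝ)+n+1)+2*i+2) * bmCoeff (i+n+1) i
        + (2*((i:ℝ)+n+1)-2*i-1) * bmCoeff (i+n+1) (i+1) := by
  unfold bmCoeff
  rw [show 2*(i+n+2) - 2*(i+1) = 2*n+2 from by omega,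
      show (i+n+2) - (i+1) = n+1 from by omega,
      show (i+n+2) + (i+1) = 2*i+n+3 from by omega,
      show 2*(i+n+1) - 2*i = 2*n+2 from by omega,
      show (i+n+1) - i = n+1 from by omega,
      show (i+n+1) + i = 2*i+n+1 from by omega,
      show 2*(i+n+1) - 2*(i+1) = 2*n from by omega,
      show (i+n+1) - (i+1) = n from by omega,
      show (i+n+1) + (i+1) = 2*i+n+2 from by omega]
  -- h1 : (n+1) * Q = 2*(2n+1) * P  where Q = C(2n+2,n+1), P = C(2n,n)
  have h1 : ((n:ℝ)+1) * ((2*n+2).choose (n+1) : ℝ) = 2*(2*(n:ℝ)+1) * ((2*n).choose n : ℝ) := by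
    have := centralStep n
    rw [show 2*(n+1) = 2*n+2 from by omega] at this
    linarith [this]
  -- h2 : (i+n+2) * S = (2i+n+3) * T
  have h2 : ((i:ℝ)+n+2) * ((2*i+n+3).choose (i+1) : ℝ)
      = (2*(i:ℝ)+n+3) * ((2*i+n+2).choose (i+1) : ℝ) := by
    have hp : ((2*i+n+3).choose (i+1) : ℝ)
        = ((2*i+n+2).choose i : ℝ) + ((2*i+n+2).choose (i+1) : ℝ) := by
      rw [show 2*i+n+3 = (2*i+n+2)+1 from by omega]
      exact_mod_cast Nat.choose_succ_succ (2*i+n+2) i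
    have hw : ((2*i+n+2).choose (i+1) : ℝ) * ((i:ℝ)+1)
        = ((2*i+n+2).choose i : ℝ) * ((i:ℝ)+n+2) := by
      have h := Nat.choose_succ_right_eq (2*i+n+2) i
      rw [show 2*i+n+2 - i = i+n+2 from by omega] at h
      exact_mod_cast h
    linear_combination ((i:ℝ)+n+2) * hp - hw
  -- h3 : (i+1) * T = (2i+n+2) * R
  have h3 : ((i:ℝ)+1) * ((2*i+n+2).choose (i+1) : ℝ)
      = (2*(i:ℝ)+n+2) * ((2*i+n+1).choose i : ℝ) := by
    have h := Nat.add_one_mul_choose_eq (2*i+n+1) i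
    have h' : (2*i+n+2) * ((2*i+n+1).choose i) = ((2*i+n+2).choose (i+1)) * (i+1) := h
    have := congrArg (Nat.cast (R := ℝ)) h'
    push_cast at this
    linarith [this]
  have key : ((i:ℝ)+n+2) * ((2*n+2).choose (n+1) : ℝ) * ((2*i+n+3).choose (i+1) : ℝ)
      = (4*(i:ℝ)+2*n+4) * ((2*n+2).choose (n+1) : ℝ) * ((2*i+n+1).choose i : ℝ)
        + 2*(2*(n:ℝ)+1) * ((2*n).choose n : ℝ) * ((2*i+n+2).choose (i+1) : ℝ) := by
    linear_combination ((2*n+2).choose (n+1) : ℝ) * h2 + 2*((2*n+2).choose (n+1) : ℝ) * h3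
      + ((2*i+n+2).choose (i+1) : ℝ) * h1
  have ha : ((2:ℝ))^(2*(i+n+1)) ≠ 0 := by positivity
  linear_combination ((2:ℝ)^i / (2:ℝ)^(2*(i+n+1))) * key

-- uniform lemma A on truncated coefficients
lemma lemmaA' (m i : ℕ) :
    2*((m:ℝ)+1) * bmC (m+1) (i+1)
      = (2*(m:ℝ)+2*i+2) * bmC m i + (2*(m:ℝ)-2*i-1) * bmC m (i+1) := by
  rcases lt_trichotomy i m with h | h | h
  · -- i < m : all within range
    obtain ⟨n, rfl⟩ : ∃ n, m = i + n + 1 := ⟨m - i - 1, by omega⟩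
    rw [show bmC (i+n+1+1) (i+1) = bmCoeff (i+n+2) (i+1) from if_pos (by omega),
        show bmC (i+n+1) i = bmCoeff (i+n+1) i from if_pos (by omega),
        show bmC (i+n+1) (i+1) = bmCoeff (i+n+1) (i+1) from if_pos (by omega)]
    have := helperA i n
    push_cast at this ⊢
    linarith [this]
  · -- i = m
    subst h
    rw [show bmC (i+1) (i+1) = bmCoeff (i+1) (i+1) from if_pos (by omega),
        show bmC i i = bmCoeff i i from if_pos (by omega),
        show bmC i (i+1) = (0:ℝ) from if_neg (by omega)]
    have := lemmaAtop i
    linarith [this]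
  · -- i > m : everything zero
    rw [show bmC (m+1) (i+1) = (0:ℝ) from if_neg (by omega),
        show bmC m i = (0:ℝ) from if_neg (by omega),
        show bmC m (i+1) = (0:ℝ) from if_neg (by omega)]
    ring

lemma keyChoose (m l i : ℕ) (h : l ≤ i) :
    (((i+1).choose (l+1) : ℕ) : ℝ) * (2*(m:ℝ)+2*(i:ℝ)+2)
      = 2*((m:ℝ)+(l:ℝ)+1) * (i.choose l : ℝ)
        + (2*(m:ℝ)+2*(l:ℝ)+2*(i:ℝ)+4) * (i.choose (l+1) : ℝ) := by
  have hp : (((i+1).choose (l+1) : ℕ) : ℝ) = (i.choose l : ℝ) + (i.choose (l+1) : ℝ) := by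
    exact_mod_cast Nat.choose_succ_succ i l
  have hr : (i.choose (l+1) : ℝ) * ((l:ℝ)+1) = (i.choose l : ℝ) * ((i:ℝ) - (l:ℝ)) := by
    have h2 := Nat.choose_succ_right_eq i l
    have h3 := congrArg (Nat.cast (R := ℝ)) h2
    push_cast at h3
    rw [Nat.cast_sub h] at h3
    exact_mod_cast h3
  linear_combination (2*(m:ℝ)+2*(i:ℝ)+2) * hp - 2 * hr

lemma lemmaB (m l : ℕ) :
    2*((m:ℝ)+1) * bmD (m+1) (l+1)
      = 2*((m:ℝ)+(l:ℝ)+1) * bmD m l + (4*(m:ℝ)+2*(l:ℝ)+5) * bmD m (l+1) := by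
  rcases le_or_gt l m with hlm | hlm
  · -- main case
    have e0 : bmD (m+1) (l+1)
        = ∑ i ∈ Ico l (m+1), (((i+1).choose (l+1) : ℕ) : ℝ) * bmC (m+1) (i+1) := by
      unfold bmD
      exact sum_shift (fun j => ((j.choose (l+1) : ℕ) : ℝ) * bmC (m+1) j) l (m+1)
    rw [e0, Finset.mul_sum]
    have e1 : ∀ i ∈ Ico l (m+1),
        2*((m:ℝ)+1) * ((((i+1).choose (l+1) : ℕ) : ℝ) * bmC (m+1) (i+1))
          = 2*((m:ℝ)+(l:ℝ)+1) * ((i.choose l : ℝ) * bmC m i)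
            + ((2*(m:ℝ)+2*(l:ℝ)+2*(i:ℝ)+4) * ((i.choose (l+1) : ℝ) * bmC m i)
               + (((i+1).choose (l+1) : ℕ) : ℝ) * ((2*(m:ℝ)-2*(i:ℝ)-1) * bmC m (i+1))) := by
      intro i hi
      have hil : l ≤ i := (Finset.mem_Ico.mp hi).1
      have hA := lemmaA' m i
      have hK := keyChoose m l i hil
      linear_combination ((((i+1).choose (l+1) : ℕ) : ℝ)) * hA + (bmC m i) * hK
    rw [Finset.sum_congr rfl e1, Finset.sum_add_distrib]
    have eA : ∑ i ∈ Ico l (m+1), 2*((m:ℝ)+(l:ℝ)+1) * ((i.choose l : ℝ) * bmC m i)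
        = 2*((m:ℝ)+(l:ℝ)+1) * bmD m l := by
      rw [bmD, Finset.mul_sum]
    rw [eA]
    congr 1
    -- remaining: the second sum equals (4m+2l+5) * bmD m (l+1)
    rw [Finset.sum_add_distrib]
    -- the h-part: shift index
    have e2 : ∑ i ∈ Ico l (m+1),
        (((i+1).choose (l+1) : ℕ) : ℝ) * ((2*(m:ℝ)-2*(i:ℝ)-1) * bmC m (i+1))
        = ∑ j ∈ Ico (l+1) (m+1+1), ((j.choose (l+1) : ℕ) : ℝ) * ((2*(m:ℝ)+1-2*(j:ℝ)) * bmC m j) := by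
      rw [sum_shift (fun j => ((j.choose (l+1) : ℕ) : ℝ) * ((2*(m:ℝ)+1-2*(j:ℝ)) * bmC m j)) l (m+1)]
      apply Finset.sum_congr rfl
      intro i _
      push_cast
      ring
    rw [e2, Finset.sum_Ico_succ_top (by omega : l+1 ≤ m+1)]
    have e3 : bmC m (m+1) = 0 := if_neg (by omega)
    rw [e3]
    -- the g-part: restrict to Ico (l+1) (m+1) since choose l (l+1) = 0
    have e4 : ∑ i ∈ Ico l (m+1), (2*(m:ℝ)+2*(l:ℝ)+2*(i:ℝ)+4) * ((i.choose (l+1) : ℝ) * bmC m i)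
        = ∑ i ∈ Ico (l+1) (m+1), (2*(m:ℝ)+2*(l:ℝ)+2*(i:ℝ)+4) * ((i.choose (l+1) : ℝ) * bmC m i) := by
      rw [Finset.sum_eq_sum_Ico_succ_bot (by omega : l < m+1)]
      rw [Nat.choose_succ_self l]
      push_cast
      ring
    rw [e4]
    rw [bmD, Finset.mul_sum]
    simp only [mul_zero, add_zero]
    rw [← Finset.sum_add_distrib]
    apply Finset.sum_congr rfl
    intro j _
    ring
  · -- l > m : everything vanishes
    rw [bmD_zero m l hlm, bmD_zero m (l+1) (by omega), bmD_zero (m+1) (l+1) (by omega)]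
    ring

lemma lemmaB0 (m : ℕ) : 2*((m:ℝ)+1) * bmD (m+1) 0 = (4*(m:ℝ)+3) * bmD m 0 := by
  have e0 : bmD (m+1) 0
      = (1:ℝ) * bmC (m+1) 0 + ∑ i ∈ Ico 0 (m+1), (((i+1).choose 0 : ℕ) : ℝ) * bmC (m+1) (i+1) := by
    unfold bmD
    rw [Finset.sum_eq_sum_Ico_succ_bot (by omega : 0 < m+1+1)]
    rw [sum_shift (fun j => ((j.choose 0 : ℕ) : ℝ) * bmC (m+1) j) 0 (m+1)]
    norm_num
  rw [e0]
  have e1 : ∀ i ∈ Ico 0 (m+1),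
      2*((m:ℝ)+1) * ((((i+1).choose 0 : ℕ) : ℝ) * bmC (m+1) (i+1))
        = (2*(m:ℝ)+2*(i:ℝ)+2) * ((i.choose 0 : ℝ) * bmC m i)
          + ((1:ℝ)) * ((2*(m:ℝ)-2*(i:ℝ)-1) * bmC m (i+1)) := by
    intro i _
    have hA := lemmaA' m i
    simp only [Nat.choose_zero_right, Nat.cast_one]
    linarith [hA]
  rw [mul_add, Finset.mul_sum, Finset.sum_congr rfl e1, Finset.sum_add_distrib]
  have e2 : ∑ i ∈ Ico 0 (m+1), (1:ℝ) * ((2*(m:ℝ)-2*(i:ℝ)-1) * bmC m (i+1))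
      = ∑ j ∈ Ico 1 (m+1+1), ((1:ℝ)) * ((2*(m:ℝ)+1-2*(j:ℝ)) * bmC m j) := by
    rw [sum_shift (fun j => ((1:ℝ)) * ((2*(m:ℝ)+1-2*(j:ℝ)) * bmC m j)) 0 (m+1)]
    apply Finset.sum_congr rfl
    intro i _
    push_cast
    ring
  rw [e2, Finset.sum_Ico_succ_top (by omega : 1 ≤ m+1), show bmC m (m+1) = 0 from if_neg (by omega)]
  have e3 : ∑ j ∈ Ico 1 (m+1), ((1:ℝ)) * ((2*(m:ℝ)+1-2*(j:ℝ)) * bmC m j)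
      = (∑ j ∈ Ico 0 (m+1), ((2*(m:ℝ)+1-2*(j:ℝ)) * bmC m j)) - (2*(m:ℝ)+1) * bmC m 0 := by
    rw [Finset.sum_eq_sum_Ico_succ_bot (show 0 < m+1 by omega)
        (fun j => (2*(m:ℝ)+1-2*(j:ℝ)) * bmC m j)]
    simp only [Nat.cast_zero, one_mul]
    ring
  rw [e3]
  have e4 : ∑ i ∈ Ico 0 (m+1), (2*(m:ℝ)+2*(i:ℝ)+2) * ((i.choose 0 : ℝ) * bmC m i)
      + ∑ j ∈ Ico 0 (m+1), ((2*(m:ℝ)+1-2*(j:ℝ)) * bmC m j) = (4*(m:ℝ)+3) * bmD m 0 := by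
    rw [bmD, Finset.mul_sum, ← Finset.sum_add_distrib]
    apply Finset.sum_congr rfl
    intro j _
    simp only [Nat.choose_zero_right, Nat.cast_one]
    ring
  have e5 : 2*((m:ℝ)+1) * ((1:ℝ) * bmC (m+1) 0) = (2*(m:ℝ)+1) * bmC m 0 := by
    rw [one_mul, show bmC (m+1) 0 = bmCoeff (m+1) 0 from if_pos (by omega),
        show bmC m 0 = bmCoeff m 0 from if_pos (by omega)]
    exact lemmaA0 m
  linarith [e4, e5]

lemma bmLC : ∀ m j : ℕ, bmD m j * bmD m (j+2) ≤ bmD m (j+1)^2 := by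
  intro m
  induction m with
  | zero =>
    intro j
    rw [bmD_zero 0 (j+2) (by omega), mul_zero]
    exact sq_nonneg _
  | succ m ih =>
    intro j
    by_cases hj : j + 2 ≤ m + 1
    swap
    · rw [bmD_zero (m+1) (j+2) (by omega), mul_zero]
      exact sq_nonneg _
    have hm1 : (0:ℝ) < 2*((m:ℝ)+1) := by positivity
    have goal2 : (2*((m:ℝ)+1) * bmD (m+1) j) * (2*((m:ℝ)+1) * bmD (m+1) (j+2))
        ≤ (2*((m:ℝ)+1) * bmD (m+1) (j+1))^2 → bmD (m+1) j * bmD (m+1) (j+2) ≤ bmD (m+1) (j+1)^2 := by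
      intro h
      have h4 : (0:ℝ) < (2*((m:ℝ)+1))^2 := by positivity
      nlinarith [h, h4]
    apply goal2
    match j, hj with
    | 0, hj =>
      -- k = 1 case
      have r0 := lemmaB0 m
      have r1 := lemmaB m 0
      have r2 := lemmaB m 1
      have h1 := ih 0
      have ha := bmD_nonneg m 0
      have hb := bmD_nonneg m 1
      have hc := bmD_nonneg m 2
      have hmn : (0:ℝ) ≤ (m:ℝ) := Nat.cast_nonneg m
      rw [r0, r1, r2]
      push_cast at *
      nlinarith [h1, mul_nonneg ha hb, mul_nonneg hb hc, sq_nonneg (bmD m 0), sq_nonneg (bmD m 1),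
        mul_nonneg (mul_nonneg hmn ha) hb, mul_nonneg (mul_nonneg hmn hmn) (sq_nonneg (bmD m 0)),
        mul_nonneg hmn (sq_nonneg (bmD m 0)),
        mul_nonneg (mul_nonneg hmn hmn) (sub_nonneg.mpr h1), mul_nonneg hmn (sub_nonneg.mpr h1)]
    | (i+1), hj =>
      -- k = j+2 = i+2 case, i+3 ≤ m+1
      have r1 := lemmaB m i
      have r2 := lemmaB m (i+1)
      have r3 := lemmaB m (i+2)
      have h1 := ih i
      have h2 := ih (i+1)
      have ha := bmD_nonneg m i
      have hb := bmD_pos m (i+1) (by omega)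
      have hc := bmD_pos m (i+2) (by omega)
      have he := bmD_nonneg m (i+3)
      -- h3 : bmD m i * bmD m (i+3) ≤ bmD m (i+1) * bmD m (i+2)
      have h3 : bmD m i * bmD m (i+3) ≤ bmD m (i+1) * bmD m (i+2) := by
        have hbc : (0:ℝ) < bmD m (i+1) * bmD m (i+2) := mul_pos hb hc
        have hmul : (bmD m i * bmD m (i+3)) * (bmD m (i+1) * bmD m (i+2))
            ≤ (bmD m (i+1) * bmD m (i+2)) * (bmD m (i+1) * bmD m (i+2)) := by
          nlinarith [h1, h2, mul_nonneg ha he, mul_nonneg ha hc.le, mul_nonneg hb.le he,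
            sq_nonneg (bmD m (i+1)), sq_nonneg (bmD m (i+2))]
        exact le_of_mul_le_mul_right (by linarith [hmul]) hbc
      have hmn : (0:ℝ) ≤ (m:ℝ) := Nat.cast_nonneg m
      have hin : (0:ℝ) ≤ (i:ℝ) := Nat.cast_nonneg i
      rw [show ((i:ℕ)+1+1 : ℕ) = i+2 from rfl] at r2 ⊢
      rw [show ((i:ℕ)+2+1 : ℕ) = i+3 from rfl] at r3 ⊢
      rw [r1, r2, r3]
      push_cast
      set a := bmD m i
      set b := bmD m (i+1)
      set c := bmD m (i+2)
      set e := bmD m (i+3)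
      have t1 : (0:ℝ) ≤ 4*((m:ℝ)+(i:ℝ)+1)*((m:ℝ)+(i:ℝ)+3) * (b^2 - a*c) :=
        mul_nonneg (by positivity) (by linarith)
      have t2 : (0:ℝ) ≤ 2*((m:ℝ)+(i:ℝ)+1)*(4*(m:ℝ)+2*(i:ℝ)+9) * (b*c - a*e) :=
        mul_nonneg (by positivity) (by linarith)
      have t3 : (0:ℝ) ≤ (4*(m:ℝ)+2*(i:ℝ)+5)*(4*(m:ℝ)+2*(i:ℝ)+9) * (c^2 - b*e) :=
        mul_nonneg (by positivity) (by linarith)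
      have t4 : (0:ℝ) ≤ 4*(b+c)^2 := by positivity
      linarith [t1, t2, t3, t4]

lemma bmD_eq (m k : ℕ) :
    (∑ j ∈ Icc k m, (j.choose k : ℝ) * bmCoeff m j) = bmD m k := by
  rw [bmD, ← Finset.Ico_add_one_right_eq_Icc]
  apply Finset.sum_congr rfl
  intro j hj
  rw [Finset.mem_Ico] at hj
  rw [show bmC m j = bmCoeff m j from if_pos (by omega)]

open Finset in
theorem stmt_14 (m : ℕ) (d : ℕ → ℝ)
    (hd : ∀ k ≤ m, d k = ∑ j ∈ Icc k m, (j.choose k : ℝ) * bmCoeff m j) :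
    ∀ k : ℕ, 1 ≤ k → k + 1 ≤ m → d (k - 1) * d (k + 1) ≤ d k ^ 2 := by
  intro k hk hkm
  obtain ⟨j, rfl⟩ : ∃ j, k = j + 1 := ⟨k - 1, by omega⟩
  rw [hd (j+1-1) (by omega), hd (j+1) (by omega), hd (j+1+1) (by omega)]
  rw [show j+1-1 = j from by omega, show j+1+1 = j+2 from rfl]
  rw [bmD_eq, bmD_eq, bmD_eq]
  exact bmLC m j
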